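/- Let A ⊆ S_{ℤ₄²} satisfy: (1) A ⊕ τ((2ℤ₄)²) = B, where B = {α ∈ S_{ℤ₄²} : π(α) ∈ {−1,1}²} and the tiling holds with respect to the group operation α + β = α ∘ β with the summands τ(h) on the right; and (2) for every cycle σ ∈ S_{ℤ₄²} (a permutation acting as a single 16-cycle on ℤ₄²) and every φ in the stabilizer of {−1,1}² pointwise, A ⊕ {φ, σ, 2σ, …, 15σ} = S_{ℤ₄²}. Then A = {α ∈ S_{ℤ₄²} : π(α) = y} for some y ∈ {−1,1}². Conversely any such set satisfies (1) and (2). -/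

import Mathlib

open Pointwise

/-- The 16-element set on which our permutations act. -/
abbrev X4 := ZMod 4 × ZMod 4

/-- The Hamming cube `{-1,1}²`, viewed as the coset `(1,1) + (2ℤ₄)²` in `ℤ₄²`. -/
def Hcube : Set X4 := {y | (y.1 = 1 ∨ y.1 = -1) ∧ (y.2 = 1 ∨ y.2 = -1)}

/-- `π(α) = α⁻¹(0,0)`. -/
def piMap (α : Equiv.Perm X4) : X4 := α⁻¹ 0

/-- All products `a ∘ f` (`a ∈ A`, `f ∈ F`) are distinct. -/
def DistinctProds (A F : Set (Equiv.Perm X4)) : Prop :=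
  ∀ a ∈ A, ∀ f ∈ F, ∀ a' ∈ A, ∀ f' ∈ F, a * f = a' * f' → a = a' ∧ f = f'

/-- The (nonabelian) tiling equation `A ⊕ F = E`, with the tile acting on the right. -/
def PTiles (A F E : Set (Equiv.Perm X4)) : Prop := DistinctProds A F ∧ A * F = E

/-- A permutation of `ℤ₄²` acting as a single 16-cycle. -/
def IsCycle16 (σ : Equiv.Perm X4) : Prop := σ.IsCycle ∧ σ.support = Finset.univ

/-- The pointwise stabilizer of the Hamming cube `{-1,1}²`. -/
def StabH : Set (Equiv.Perm X4) := {φ | ∀ y ∈ Hcube, φ y = y}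

/-! ### Auxiliary lemmas -/

theorem Equiv.Perm.apply_inv_self {α : Type*} (f : Equiv.Perm α) (x : α) : f (f⁻¹ x) = x :=
  f.apply_symm_apply x

theorem Equiv.Perm.inv_apply_self {α : Type*} (f : Equiv.Perm α) (x : α) : f⁻¹ (f x) = x :=
  f.symm_apply_apply x

lemma mem_Hcube (x : X4) : x ∈ Hcube ↔ x = (1,1) ∨ x = (1,3) ∨ x = (3,1) ∨ x = (3,3) := by
  have h : ∀ x : X4, ((x.1 = 1 ∨ x.1 = -1) ∧ (x.2 = 1 ∨ x.2 = -1)) ↔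
      (x = (1,1) ∨ x = (1,3) ∨ x = (3,1) ∨ x = (3,3)) := by decide
  exact h x

lemma Hc_add (y h : X4) (hy : y ∈ Hcube) (h1 : h.1 = 0 ∨ h.1 = 2) (h2 : h.2 = 0 ∨ h.2 = 2) :
    y + h ∈ Hcube := by
  rw [mem_Hcube] at *
  revert hy h1 h2
  have : ∀ y h : X4, (y = (1,1) ∨ y = (1,3) ∨ y = (3,1) ∨ y = (3,3)) →
      (h.1 = 0 ∨ h.1 = 2) → (h.2 = 0 ∨ h.2 = 2) →
      (y + h = (1,1) ∨ y + h = (1,3) ∨ y + h = (3,1) ∨ y + h = (3,3)) := by decide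
  exact this y h

lemma Hc_sub (y h : X4) (hy : y ∈ Hcube) (h1 : h.1 = 0 ∨ h.1 = 2) (h2 : h.2 = 0 ∨ h.2 = 2) :
    y - h ∈ Hcube := by
  rw [mem_Hcube] at *
  revert hy h1 h2
  have : ∀ y h : X4, (y = (1,1) ∨ y = (1,3) ∨ y = (3,1) ∨ y = (3,3)) →
      (h.1 = 0 ∨ h.1 = 2) → (h.2 = 0 ∨ h.2 = 2) →
      (y - h = (1,1) ∨ y - h = (1,3) ∨ y - h = (3,1) ∨ y - h = (3,3)) := by decide
  exact this y h

lemma Hc_diff (y z : X4) (hy : y ∈ Hcube) (hz : z ∈ Hcube) :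
    ((z - y).1 = 0 ∨ (z - y).1 = 2) ∧ ((z - y).2 = 0 ∨ (z - y).2 = 2) := by
  rw [mem_Hcube] at hy hz
  revert hy hz
  have : ∀ y z : X4, (y = (1,1) ∨ y = (1,3) ∨ y = (3,1) ∨ y = (3,3)) →
      (z = (1,1) ∨ z = (1,3) ∨ z = (3,1) ∨ z = (3,3)) →
      (((z - y).1 = 0 ∨ (z - y).1 = 2) ∧ ((z - y).2 = 0 ∨ (z - y).2 = 2)) := by decide
  exact this y z

lemma subRight_inv_apply (h x : X4) : ((Equiv.subRight h : Equiv.Perm X4))⁻¹ x = x + h := by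
  simp [Equiv.Perm.inv_def]

lemma subRight_zero : (Equiv.subRight (0:X4) : Equiv.Perm X4) = 1 := by
  ext x : 1
  simp

lemma piMap_mul (a f : Equiv.Perm X4) : piMap (a * f) = f⁻¹ (piMap a) := by
  simp [piMap, mul_inv_rev, Equiv.Perm.mul_apply]

lemma card_X4 : Fintype.card X4 = 16 := by simp [Fintype.card_prod, ZMod.card]

/-- Any injective partial map on the Hamming cube whose functional graph consists of a single
edge inside the cube (non-loop) and otherwise exits the cube extends to a 16-cycle. -/
lemma extend16 (f : Equiv.Perm X4) (z t : X4) (hz : z ∈ Hcube) (ht : t ∈ Hcube)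
    (hne : z ≠ t) (hfz : f z = t) (hout : ∀ w ∈ Hcube, w ≠ z → f w ∉ Hcube) :
    ∃ σ : Equiv.Perm X4, σ.IsCycle ∧ σ.support = Finset.univ ∧ ∀ w ∈ Hcube, σ w = f w := by
  classical
  set HF : Finset X4 := {(1,1),(1,3),(3,1),(3,3)} with hHF
  have memHF : ∀ x : X4, x ∈ Hcube ↔ x ∈ HF := by
    intro x; rw [mem_Hcube]; simp [hHF]
  have hsub : ({z, t} : Finset X4) ⊆ HF := by
    intro x hx
    rcases Finset.mem_insert.1 hx with rfl | hx
    · exact (memHF x).1 hz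
    · rw [Finset.mem_singleton] at hx; subst hx; exact (memHF x).1 ht
  have hztc : ({z, t} : Finset X4).card = 2 := by
    rw [Finset.card_insert_of_notMem (by simp [hne]), Finset.card_singleton]
  have hHFc : HF.card = 4 := by rw [hHF]; decide
  have hcard : (HF \ {z, t}).card = 2 := by
    rw [Finset.card_sdiff_of_subset hsub, hztc, hHFc]
  obtain ⟨u, v, huv, hs⟩ := Finset.card_eq_two.1 hcard
  have hu' : u ∈ HF \ {z, t} := by rw [hs]; simp
  have hv' : v ∈ HF \ {z, t} := by rw [hs]; simp
  have hu : u ∈ HF ∧ u ≠ z ∧ u ≠ t := by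
    have := Finset.mem_sdiff.1 hu'
    refine ⟨this.1, ?_, ?_⟩ <;> · intro h; apply this.2; simp [h]
  have hv : v ∈ HF ∧ v ≠ z ∧ v ≠ t := by
    have := Finset.mem_sdiff.1 hv'
    refine ⟨this.1, ?_, ?_⟩ <;> · intro h; apply this.2; simp [h]
  have huH : u ∈ Hcube := (memHF u).2 hu.1
  have hvH : v ∈ Hcube := (memHF v).2 hv.1
  have hHsub : ∀ w ∈ Hcube, w = z ∨ w = t ∨ w = u ∨ w = v := by
    intro w hw
    by_cases h1 : w = z
    · exact Or.inl h1
    by_cases h2 : w = t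
    · exact Or.inr (Or.inl h2)
    have : w ∈ HF \ {z, t} := by
      rw [Finset.mem_sdiff]; exact ⟨(memHF w).1 hw, by simp [h1, h2]⟩
    rw [hs] at this
    rcases Finset.mem_insert.1 this with h | h
    · exact Or.inr (Or.inr (Or.inl h))
    · exact Or.inr (Or.inr (Or.inr (Finset.mem_singleton.1 h)))
  set b := f t with hb
  set c := f u with hc
  set d := f v with hd
  have hbH : b ∉ Hcube := hout t ht (Ne.symm hne)
  have hcH : c ∉ Hcube := hout u huH hu.2.1
  have hdH : d ∉ Hcube := hout v hvH hv.2.1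
  have finj := f.injective
  have hbt : b ≠ c := fun h => hu.2.2 (finj h).symm
  have hbd : b ≠ d := fun h => hv.2.2 (finj h).symm
  have hcd : c ≠ d := fun h => huv (finj h)
  have htb : t ≠ b := fun h => hbH (h ▸ ht)
  have htc : t ≠ c := fun h => hcH (h ▸ ht)
  have htd : t ≠ d := fun h => hdH (h ▸ ht)
  have hzb : z ≠ b := fun h => hbH (h ▸ hz)
  have hzc : z ≠ c := fun h => hcH (h ▸ hz)
  have hzd : z ≠ d := fun h => hdH (h ▸ hz)
  have hub : u ≠ b := fun h => hbH (h ▸ huH)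
  have huc : u ≠ c := fun h => hcH (h ▸ huH)
  have hud : u ≠ d := fun h => hdH (h ▸ huH)
  have hvb : v ≠ b := fun h => hbH (h ▸ hvH)
  have hvc : v ≠ c := fun h => hcH (h ▸ hvH)
  have hvd : v ≠ d := fun h => hdH (h ▸ hvH)
  have hzu : z ≠ u := Ne.symm hu.2.1
  have hzv : z ≠ v := Ne.symm hv.2.1
  have htu : t ≠ u := Ne.symm hu.2.2
  have htv : t ≠ v := Ne.symm hv.2.2
  set front : List X4 := [z, t, b, u, c, v, d] with hfront
  have hfrontnd : front.Nodup := by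
    simp [hfront, hne, hzb, hzu, hzc, hzv, hzd, htb, htu, htc, htv, htd,
      hbt.symm, hub, hbd, hvb, hbt, huc, hud, huv, hvc, hcd, hvd,
      fun h => hub (Eq.symm h)]
    exact ⟨⟨fun h => hub h.symm, fun h => hvb h.symm⟩, fun h => hvc h.symm⟩
  have hfrontlen : front.length = 7 := by simp [hfront]
  set rest : List X4 := (Finset.univ \ front.toFinset).toList with hrest
  have hrestnd : rest.Nodup := Finset.nodup_toList _
  have hmemrest : ∀ x : X4, x ∈ rest ↔ x ∉ front := by
    intro x
    rw [hrest, Finset.mem_toList, Finset.mem_sdiff]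
    simp [List.mem_toFinset]
  set l : List X4 := front ++ rest with hl
  have hlnd : l.Nodup := by
    rw [hl, List.nodup_append]
    exact ⟨hfrontnd, hrestnd, fun x hx y hy hxy => (hmemrest y).1 hy (hxy ▸ hx)⟩
  have hfronttc : front.toFinset.card = 7 := by
    rw [List.toFinset_card_of_nodup hfrontnd, hfrontlen]
  have hrestlen : rest.length = 9 := by
    rw [hrest, Finset.length_toList, Finset.card_sdiff_of_subset (Finset.subset_univ _),
      hfronttc, Finset.card_univ, card_X4]
  have hllen : l.length = 16 := by rw [hl, List.length_append, hfrontlen, hrestlen]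
  have hluniv : ∀ x : X4, x ∈ l := by
    intro x
    rw [hl, List.mem_append]
    by_cases h : x ∈ front
    · exact Or.inl h
    · exact Or.inr ((hmemrest x).2 h)
  refine ⟨l.formPerm, List.isCycle_formPerm hlnd (by omega), ?_, ?_⟩
  · rw [List.support_formPerm_of_nodup l hlnd (by intro x h; rw [h] at hllen; simp at hllen)]
    apply Finset.eq_univ_of_forall
    intro x; rw [List.mem_toFinset]; exact hluniv x
  · have happ : ∀ (i : ℕ) (h : i + 1 < l.length), l.formPerm l[i] = l[i+1] :=
      fun i h => List.formPerm_apply_lt_getElem l hlnd i h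
    have e0 : l[0]'(by omega) = z := by simp [hl, hfront]
    have e1 : l[1]'(by omega) = t := by simp [hl, hfront]
    have e2 : l[2]'(by omega) = b := by simp [hl, hfront]
    have e3 : l[3]'(by omega) = u := by simp [hl, hfront]
    have e4 : l[4]'(by omega) = c := by simp [hl, hfront]
    have e5 : l[5]'(by omega) = v := by simp [hl, hfront]
    have e6 : l[6]'(by omega) = d := by simp [hl, hfront]
    intro w hw
    rcases hHsub w hw with rfl | rfl | rfl | rfl
    · rw [hfz]; have := happ 0 (by omega); rw [e0, e1] at this; exact this
    · rw [← hb]; have := happ 1 (by omega); rw [e1, e2] at this; exact this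
    · rw [← hc]; have := happ 3 (by omega); rw [e3, e4] at this; exact this
    · rw [← hd]; have := happ 5 (by omega); rw [e5, e6] at this; exact this

lemma cycle16_order (σ : Equiv.Perm X4) (hσ : IsCycle16 σ) : orderOf σ = 16 := by
  rw [hσ.1.orderOf, hσ.2, Finset.card_univ, card_X4]

lemma cycle16_pow_fix (σ : Equiv.Perm X4) (hσ : IsCycle16 σ) (x : X4) (k : ℕ)
    (h1 : 1 ≤ k) (h2 : k ≤ 15) (hfix : (σ ^ k) x = x) : False := by
  have hx : σ x ≠ x := by
    rw [← Equiv.Perm.mem_support, hσ.2]; exact Finset.mem_univ x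
  have h1' : σ ^ k = 1 := (hσ.1.pow_eq_one_iff' hx).2 hfix
  have hdvd : orderOf σ ∣ k := orderOf_dvd_of_pow_eq_one h1'
  rw [cycle16_order σ hσ] at hdvd
  have := Nat.le_of_dvd (by omega) hdvd
  omega

lemma cycle16_exists_pow (σ : Equiv.Perm X4) (hσ : IsCycle16 σ) (x y : X4) (hxy : x ≠ y) :
    ∃ k : ℕ, 1 ≤ k ∧ k ≤ 15 ∧ (σ ^ k) x = y := by
  have hx : σ x ≠ x := by
    rw [← Equiv.Perm.mem_support, hσ.2]; exact Finset.mem_univ x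
  have hy : σ y ≠ y := by
    rw [← Equiv.Perm.mem_support, hσ.2]; exact Finset.mem_univ y
  obtain ⟨i, hi⟩ := hσ.1.exists_pow_eq hx hy
  have hmod : σ ^ (i % 16) = σ ^ i := by
    conv_rhs => rw [← pow_mod_orderOf]
    rw [cycle16_order σ hσ]
  refine ⟨i % 16, ?_, ?_, ?_⟩
  · rcases Nat.eq_zero_or_pos (i % 16) with h | h
    · exfalso
      rw [h] at hmod
      rw [← hmod] at hi
      simp at hi
      exact hxy hi
    · omega
  · have := Nat.mod_lt i (show 0 < 16 by norm_num)
    omega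
  · rw [hmod]; exact hi

lemma converse_dir (y : X4) (hy : y ∈ Hcube) :
    (PTiles {α : Equiv.Perm X4 | piMap α = y}
        {p : Equiv.Perm X4 | ∃ h : X4, (h.1 = 0 ∨ h.1 = 2) ∧ (h.2 = 0 ∨ h.2 = 2) ∧
          p = (Equiv.subRight h : Equiv.Perm X4)}
        {α : Equiv.Perm X4 | piMap α ∈ Hcube} ∧
      ∀ σ φ : Equiv.Perm X4, IsCycle16 σ → φ ∈ StabH →
        PTiles {α : Equiv.Perm X4 | piMap α = y}
          {p : Equiv.Perm X4 | p = φ ∨ ∃ k : ℕ, 1 ≤ k ∧ k ≤ 15 ∧ p = σ ^ k}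
          Set.univ) := by
  set A : Set (Equiv.Perm X4) := {α : Equiv.Perm X4 | piMap α = y} with hA
  have hmemA : ∀ a : Equiv.Perm X4, a ∈ A ↔ piMap a = y := fun a => Iff.rfl
  constructor
  · constructor
    · rintro a ha f ⟨h, hh1, hh2, rfl⟩ a' ha' f' ⟨h', hh1', hh2', rfl⟩ heq
      have hpi := congrArg piMap heq
      rw [piMap_mul, piMap_mul, subRight_inv_apply, subRight_inv_apply,
        (hmemA a).1 ha, (hmemA a').1 ha'] at hpi
      have hhh : h = h' := by exact add_left_cancel hpi
      subst hhh
      exact ⟨mul_right_cancel heq, rfl⟩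
    · ext β
      constructor
      · rintro ⟨a, ha, f, ⟨h, hh1, hh2, rfl⟩, rfl⟩
        show piMap _ ∈ Hcube
        rw [piMap_mul, subRight_inv_apply, (hmemA a).1 ha]
        exact Hc_add y h hy hh1 hh2
      · intro hβ
        have hβ' : piMap β ∈ Hcube := hβ
        refine ⟨β * (Equiv.subRight (piMap β - y) : Equiv.Perm X4)⁻¹, ?_,
          (Equiv.subRight (piMap β - y) : Equiv.Perm X4),
          ⟨piMap β - y, (Hc_diff y (piMap β) hy hβ').1, (Hc_diff y (piMap β) hy hβ').2, rfl⟩,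
          by simp⟩
        rw [hmemA, piMap_mul, inv_inv]
        show (piMap β) - (piMap β - y) = y
        exact sub_sub_cancel _ _
  · intro σ φ hσ hφ
    have hφy : ∀ z ∈ Hcube, φ⁻¹ z = z := by
      intro z hz
      conv_lhs => rw [← hφ z hz]
      exact φ.inv_apply_self z
    constructor
    · rintro a ha f hf a' ha' f' hf' heq
      have hpi := congrArg piMap heq
      rw [piMap_mul, piMap_mul, (hmemA a).1 ha, (hmemA a').1 ha'] at hpi
      have hff : f = f' := by
        rcases hf with rfl | ⟨k, hk1, hk2, rfl⟩ <;> rcases hf' with rfl | ⟨j, hj1, hj2, rfl⟩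
        · rfl
        · exfalso
          rw [hφy y hy] at hpi
          have : (σ ^ j) y = y := by
            conv_lhs => rw [hpi]
            exact (σ ^ j).apply_inv_self y
          exact cycle16_pow_fix σ hσ y j hj1 hj2 this
        · exfalso
          rw [hφy y hy] at hpi
          have : (σ ^ k) y = y := by
            conv_lhs => rw [← hpi]
            exact (σ ^ k).apply_inv_self y
          exact cycle16_pow_fix σ hσ y k hk1 hk2 this
        · rcases le_total k j with hkj | hkj
          · have hw : (σ ^ (j - k)) ((σ ^ k) ((σ ^ j)⁻¹ y)) = (σ ^ k) ((σ ^ j)⁻¹ y) := by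
              rw [← Equiv.Perm.mul_apply, ← pow_add]
              have : j - k + k = j := by omega
              rw [this, Equiv.Perm.apply_inv_self, ← hpi, Equiv.Perm.apply_inv_self]
            rcases Nat.eq_zero_or_pos (j - k) with h0 | h0
            · have : k = j := by omega
              subst this; rfl
            · exact absurd hw (by
                intro hww
                exact cycle16_pow_fix σ hσ _ (j - k) (by omega) (by omega) hww)
          · have hw : (σ ^ (k - j)) ((σ ^ j) ((σ ^ k)⁻¹ y)) = (σ ^ j) ((σ ^ k)⁻¹ y) := by
              rw [← Equiv.Perm.mul_apply, ← pow_add]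
              have : k - j + j = k := by omega
              rw [this, Equiv.Perm.apply_inv_self, hpi, Equiv.Perm.apply_inv_self]
            rcases Nat.eq_zero_or_pos (k - j) with h0 | h0
            · have : k = j := by omega
              subst this; rfl
            · exact absurd hw (by
                intro hww
                exact cycle16_pow_fix σ hσ _ (k - j) (by omega) (by omega) hww)
      subst hff
      exact ⟨mul_right_cancel heq, rfl⟩
    · apply Set.eq_univ_of_forall
      intro β
      by_cases hx : piMap β = y
      · refine ⟨β * φ⁻¹, ?_, φ, Or.inl rfl, by simp⟩
        rw [hmemA, piMap_mul, inv_inv, hx]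
        exact hφ y hy
      · obtain ⟨k, hk1, hk2, hk⟩ := cycle16_exists_pow σ hσ (piMap β) y hx
        refine ⟨β * (σ ^ k)⁻¹, ?_, σ ^ k, Or.inr ⟨k, hk1, hk2, rfl⟩, by simp⟩
        rw [hmemA, piMap_mul, inv_inv, hk]
lemma forward_dir (A : Set (Equiv.Perm X4))
    (hp1 : PTiles A
        {p : Equiv.Perm X4 | ∃ h : X4, (h.1 = 0 ∨ h.1 = 2) ∧ (h.2 = 0 ∨ h.2 = 2) ∧
          p = (Equiv.subRight h : Equiv.Perm X4)}
        {α : Equiv.Perm X4 | piMap α ∈ Hcube})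
    (hp2 : ∀ σ φ : Equiv.Perm X4, IsCycle16 σ → φ ∈ StabH →
        PTiles A {p : Equiv.Perm X4 | p = φ ∨ ∃ k : ℕ, 1 ≤ k ∧ k ≤ 15 ∧ p = σ ^ k}
          Set.univ) :
    ∃ y ∈ Hcube, A = {α : Equiv.Perm X4 | piMap α = y} := by
  classical
  have hAB : ∀ a ∈ A, piMap a ∈ Hcube := by
    intro a ha
    have hmem : a ∈ A * {p : Equiv.Perm X4 | ∃ h : X4, (h.1 = 0 ∨ h.1 = 2) ∧
        (h.2 = 0 ∨ h.2 = 2) ∧ p = (Equiv.subRight h : Equiv.Perm X4)} :=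
      ⟨a, ha, (Equiv.subRight (0:X4) : Equiv.Perm X4),
        ⟨0, Or.inl rfl, Or.inl rfl, rfl⟩, by rw [subRight_zero]; exact mul_one a⟩
    rw [hp1.2] at hmem
    exact hmem
  have hANe : ∃ a, a ∈ A := by
    have hβ0 : Equiv.swap (0 : X4) ((1,1) : X4) ∈ {α : Equiv.Perm X4 | piMap α ∈ Hcube} := by
      show piMap _ ∈ Hcube
      rw [piMap, Equiv.swap_inv, Equiv.swap_apply_left, mem_Hcube]
      exact Or.inl rfl
    rw [← hp1.2] at hβ0
    obtain ⟨a, ha, -, -, -⟩ := hβ0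
    exact ⟨a, ha⟩
  have key : ∀ α ∈ A, ∀ α' ∈ A, piMap α = piMap α' := by
    intro α hα α' hα'
    by_contra hne
    set y := piMap α with hydef
    set y' := piMap α' with hy'def
    have hyH : y ∈ Hcube := hAB α hα
    have hy'H : y' ∈ Hcube := hAB α' hα'
    set θ : Equiv.Perm X4 := α'⁻¹ * α with hθdef
    have hθy : θ y = y' := by
      show α'⁻¹ (α y) = y'
      have h0 : α y = 0 := by rw [hydef, piMap, Equiv.Perm.apply_inv_self]
      rw [h0]; rfl
    set HF : Finset X4 := {(1,1),(1,3),(3,1),(3,3)} with hHF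
    have memHF : ∀ x : X4, x ∈ Hcube ↔ x ∈ HF := by
      intro x; rw [mem_Hcube]; simp [hHF]
    have hHFc : HF.card = 4 := by rw [hHF]; decide
    set T : Finset X4 := HF ∪ HF.image (fun z => θ z) with hT
    have hTcard : T.card ≤ 8 := by
      refine le_trans (Finset.card_union_le _ _) ?_
      have := Finset.card_image_le (s := HF) (f := fun z => θ z)
      omega
    have hScard : 3 ≤ (Finset.univ \ T).card := by
      rw [Finset.card_sdiff_of_subset (Finset.subset_univ _), Finset.card_univ, card_X4]
      omega
    obtain ⟨W, hWsub, hWcard⟩ := Finset.exists_subset_card_eq hScard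
    obtain ⟨w1, w2, w3, hw12, hw13, hw23, hWeq⟩ := Finset.card_eq_three.1 hWcard
    have hwS : ∀ w ∈ ({w1, w2, w3} : Finset X4), w ∉ Hcube ∧ ∀ z ∈ Hcube, θ z ≠ w := by
      intro w hw
      have hmem : w ∈ Finset.univ \ T := hWsub (by rw [hWeq]; exact hw)
      rw [Finset.mem_sdiff, hT, Finset.mem_union] at hmem
      push_neg at hmem
      constructor
      · intro hc; exact hmem.2.1 ((memHF w).1 hc)
      · intro z hz hc
        exact hmem.2.2 (Finset.mem_image.2 ⟨z, (memHF z).1 hz, hc⟩)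
    have hw1 := hwS w1 (by simp)
    have hw2 := hwS w2 (by simp)
    have hw3 := hwS w3 (by simp)
    have hy'HF : y' ∈ HF := (memHF y').1 hy'H
    have hcard3 : (HF \ {y'}).card = 3 := by
      rw [Finset.card_sdiff_of_subset (by simpa using hy'HF), hHFc, Finset.card_singleton]
    obtain ⟨p, q, r, hpq, hpr, hqr, hPQR⟩ := Finset.card_eq_three.1 hcard3
    have hpmem : p ∈ HF \ {y'} := by rw [hPQR]; simp
    have hqmem : q ∈ HF \ {y'} := by rw [hPQR]; simp
    have hrmem : r ∈ HF \ {y'} := by rw [hPQR]; simp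
    rw [Finset.mem_sdiff, Finset.mem_singleton] at hpmem hqmem hrmem
    have hpH : p ∈ Hcube := (memHF p).2 hpmem.1
    have hqH : q ∈ Hcube := (memHF q).2 hqmem.1
    have hrH : r ∈ Hcube := (memHF r).2 hrmem.1
    have hHdecomp : ∀ x ∈ Hcube, x = y' ∨ x = p ∨ x = q ∨ x = r := by
      intro x hx
      by_cases h1 : x = y'
      · exact Or.inl h1
      have hxm : x ∈ HF \ {y'} := by
        rw [Finset.mem_sdiff, Finset.mem_singleton]; exact ⟨(memHF x).1 hx, h1⟩
      rw [hPQR] at hxm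
      simp only [Finset.mem_insert, Finset.mem_singleton] at hxm
      exact Or.inr hxm
    have hpw1 : p ≠ w1 := fun h => hw1.1 (h ▸ hpH)
    have hpw2 : p ≠ w2 := fun h => hw2.1 (h ▸ hpH)
    have hpw3 : p ≠ w3 := fun h => hw3.1 (h ▸ hpH)
    have hqw1 : q ≠ w1 := fun h => hw1.1 (h ▸ hqH)
    have hqw2 : q ≠ w2 := fun h => hw2.1 (h ▸ hqH)
    have hqw3 : q ≠ w3 := fun h => hw3.1 (h ▸ hqH)
    have hrw1 : r ≠ w1 := fun h => hw1.1 (h ▸ hrH)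
    have hrw2 : r ≠ w2 := fun h => hw2.1 (h ▸ hrH)
    have hrw3 : r ≠ w3 := fun h => hw3.1 (h ▸ hrH)
    have hy'w1 : y' ≠ w1 := fun h => hw1.1 (h ▸ hy'H)
    have hy'w2 : y' ≠ w2 := fun h => hw2.1 (h ▸ hy'H)
    have hy'w3 : y' ≠ w3 := fun h => hw3.1 (h ▸ hy'H)
    set g : Equiv.Perm X4 :=
      Equiv.swap p w1 * (Equiv.swap q w2 * Equiv.swap r w3) with hgdef
    have gapp : ∀ x : X4, g x = Equiv.swap p w1 (Equiv.swap q w2 (Equiv.swap r w3 x)) :=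
      fun x => rfl
    have hgy' : g y' = y' := by
      rw [gapp, Equiv.swap_apply_of_ne_of_ne (Ne.symm hrmem.2) hy'w3,
        Equiv.swap_apply_of_ne_of_ne (Ne.symm hqmem.2) hy'w2,
        Equiv.swap_apply_of_ne_of_ne (Ne.symm hpmem.2) hy'w1]
    have hgp : g p = w1 := by
      rw [gapp, Equiv.swap_apply_of_ne_of_ne hpr hpw3,
        Equiv.swap_apply_of_ne_of_ne hpq hpw2, Equiv.swap_apply_left]
    have hgq : g q = w2 := by
      rw [gapp, Equiv.swap_apply_of_ne_of_ne hqr hqw3, Equiv.swap_apply_left,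
        Equiv.swap_apply_of_ne_of_ne (Ne.symm hpw2) (Ne.symm hw12)]
    have hgr : g r = w3 := by
      rw [gapp, Equiv.swap_apply_left,
        Equiv.swap_apply_of_ne_of_ne (Ne.symm hqw3) (Ne.symm hw23),
        Equiv.swap_apply_of_ne_of_ne (Ne.symm hpw3) (Ne.symm hw13)]
    have hginvy' : g⁻¹ y' = y' := by
      apply g.injective; rw [Equiv.Perm.apply_inv_self, hgy']
    have hginv : ∀ x : X4, g⁻¹ x ∈ Hcube → x = y' ∨ x = w1 ∨ x = w2 ∨ x = w3 := by
      intro x hx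
      have hgix := g.apply_inv_self x
      rcases hHdecomp _ hx with h' | h' | h' | h'
      · rw [h', hgy'] at hgix; exact Or.inl hgix.symm
      · rw [h', hgp] at hgix; exact Or.inr (Or.inl hgix.symm)
      · rw [h', hgq] at hgix; exact Or.inr (Or.inr (Or.inl hgix.symm))
      · rw [h', hgr] at hgix; exact Or.inr (Or.inr (Or.inr hgix.symm))
    have hβB : α' * g ∈ {α : Equiv.Perm X4 | piMap α ∈ Hcube} := by
      show piMap (α' * g) ∈ Hcube
      rw [piMap_mul, ← hy'def, hginvy']
      exact hy'H
    rw [← hp1.2] at hβB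
    obtain ⟨a, ha, f, ⟨h, hh1, hh2, rfl⟩, heq⟩ := hβB
    by_cases h0 : h = 0
    · -- the representative is α' ∘ g itself; compare with α
      subst h0
      rw [subRight_zero] at heq
      simp only [mul_one] at heq
      set μ : Equiv.Perm X4 := a⁻¹ * α with hμdef
      have hμapp : ∀ z, μ z = g⁻¹ (θ z) := by
        intro z
        rw [hμdef, heq, hθdef]
        simp [Equiv.Perm.mul_apply, mul_inv_rev]
      have hμy : μ y = y' := by rw [hμapp, hθy, hginvy']
      have hout : ∀ w ∈ Hcube, w ≠ y → μ w ∉ Hcube := by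
        intro w hw hwy hc
        rw [hμapp] at hc
        rcases hginv _ hc with h' | h' | h' | h'
        · exact hwy (θ.injective (h'.trans hθy.symm))
        · exact hw1.2 w hw h'
        · exact hw2.2 w hw h'
        · exact hw3.2 w hw h'
      obtain ⟨σ, hσc, hσs, hσval⟩ := extend16 μ y y' hyH hy'H hne hμy hout
      set φ : Equiv.Perm X4 := μ⁻¹ * σ with hφdef
      have hφstab : φ ∈ StabH := by
        intro w hw
        show (μ⁻¹ * σ) w = w
        rw [Equiv.Perm.mul_apply, hσval w hw, Equiv.Perm.inv_apply_self]
      have hprod : α * φ = a * σ ^ 1 := by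
        rw [hφdef, hμdef, pow_one]
        group
      obtain ⟨-, hfeq⟩ := (hp2 σ φ ⟨hσc, hσs⟩ hφstab).1 α hα φ (Or.inl rfl) a ha
        (σ ^ 1) (Or.inr ⟨1, le_refl 1, by norm_num, rfl⟩) hprod
      have h1 : φ y = y := hφstab y hyH
      rw [hfeq, pow_one, hσval y hyH, hμy] at h1
      exact hne h1.symm
    · -- nontrivial translation; compare a with α'
      have haeq : a = (α' * g) * (Equiv.subRight h : Equiv.Perm X4)⁻¹ := by
        rw [← heq, mul_inv_cancel_right]
      set ρ : Equiv.Perm X4 := a⁻¹ * α' with hρdef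
      have hρapp : ∀ z, ρ z = g⁻¹ z - h := by
        intro z
        rw [hρdef, haeq]
        simp [Equiv.Perm.mul_apply, mul_inv_rev, Equiv.Perm.inv_def]
      have ht' : y' - h ∈ Hcube := Hc_sub y' h hy'H hh1 hh2
      have hne2 : y' ≠ y' - h := by
        intro hc
        exact h0 (sub_eq_self.1 hc.symm)
      have hρy' : ρ y' = y' - h := by rw [hρapp, hginvy']
      have hout : ∀ w ∈ Hcube, w ≠ y' → ρ w ∉ Hcube := by
        intro w hw hwy hc
        rw [hρapp] at hc
        have hgw : g⁻¹ w ∈ Hcube := by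
          have := Hc_add (g⁻¹ w - h) h hc hh1 hh2
          rwa [sub_add_cancel] at this
        rcases hginv w hgw with h' | h' | h' | h'
        · exact hwy h'
        · exact hw1.1 (h' ▸ hw)
        · exact hw2.1 (h' ▸ hw)
        · exact hw3.1 (h' ▸ hw)
      obtain ⟨σ, hσc, hσs, hσval⟩ := extend16 ρ y' (y' - h) hy'H ht' hne2 hρy' hout
      set φ : Equiv.Perm X4 := ρ⁻¹ * σ with hφdef
      have hφstab : φ ∈ StabH := by
        intro w hw
        show (ρ⁻¹ * σ) w = w
        rw [Equiv.Perm.mul_apply, hσval w hw, Equiv.Perm.inv_apply_self]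
      have hprod : α' * φ = a * σ ^ 1 := by
        rw [hφdef, hρdef, pow_one]
        group
      obtain ⟨-, hfeq⟩ := (hp2 σ φ ⟨hσc, hσs⟩ hφstab).1 α' hα' φ (Or.inl rfl) a ha
        (σ ^ 1) (Or.inr ⟨1, le_refl 1, by norm_num, rfl⟩) hprod
      have h1 : φ y' = y' := hφstab y' hy'H
      rw [hfeq, pow_one, hσval y' hy'H, hρy'] at h1
      exact hne2 h1.symm
  obtain ⟨a0, ha0⟩ := hANe
  refine ⟨piMap a0, hAB a0 ha0, ?_⟩
  ext β
  simp only [Set.mem_setOf_eq]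
  constructor
  · intro hβ
    exact key β hβ a0 ha0
  · intro hβ
    have hβB : β ∈ {α : Equiv.Perm X4 | piMap α ∈ Hcube} := by
      show piMap β ∈ Hcube
      rw [hβ]
      exact hAB a0 ha0
    rw [← hp1.2] at hβB
    obtain ⟨a, ha, f, ⟨h, hh1, hh2, rfl⟩, heq⟩ := hβB
    have hpi := congrArg piMap heq
    rw [piMap_mul, subRight_inv_apply, key a ha a0 ha0, hβ] at hpi
    have h0 : h = 0 := by
      have := hpi
      rwa [add_eq_left] at this
    subst h0
    rw [subRight_zero] at heq
    simp only [mul_one] at heq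
    rwa [← heq]

theorem statement11 (A : Set (Equiv.Perm X4)) :
    (PTiles A
        {p : Equiv.Perm X4 | ∃ h : X4, (h.1 = 0 ∨ h.1 = 2) ∧ (h.2 = 0 ∨ h.2 = 2) ∧
          p = (Equiv.subRight h : Equiv.Perm X4)}
        {α : Equiv.Perm X4 | piMap α ∈ Hcube} ∧
      ∀ σ φ : Equiv.Perm X4, IsCycle16 σ → φ ∈ StabH →
        PTiles A {p : Equiv.Perm X4 | p = φ ∨ ∃ k : ℕ, 1 ≤ k ∧ k ≤ 15 ∧ p = σ ^ k}
          Set.univ) ↔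
    ∃ y ∈ Hcube, A = {α : Equiv.Perm X4 | piMap α = y} := by
  constructor
  · rintro ⟨hp1, hp2⟩
    exact forward_dir A hp1 hp2
  · rintro ⟨y, hy, rfl⟩
    exact converse_dir y hy
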